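/- arXiv:0905.1181 — 3 statements merged into one kernel-verified Lean document; each statement's English description precedes it below -/
import Mathlib

section
/- Let m > n ≥ 1 be integers. Let G be the group of pairs w = (σ,η) with σ ∈ S_m, η ∈ {±1}^m and ∏_i η_i = 1, acting linearly on ℝ^{m+n} (with standard basis ε_1,…,ε_m,δ_1,…,δ_n) by w(ε_i) = η_i ε_{σ(i)} and w(δ_j) = δ_j. Define ρ := Σ_{i=1}^{n} (m−n−1)ε_i + Σ_{i=n+1}^{m−1} (m−1−i)ε_i (so the coefficient of ε_m is 0), and define Δ_{+,1} := {ε_a+δ_b : 1≤a≤m, 1≤b≤n} ∪ {ε_a−δ_b : 1≤b≤n−1, a≤b} ∪ {ε_a−δ_n : 1≤a≤m−1} ∪ {δ_b−ε_a : 1≤b≤n−1, a>b} ∪ {δ_n−ε_m}. Let A := {w ∈ G : wρ = ρ, w(ε_i)−δ_i ∈ Δ_{+,1} for all 1≤i≤n−1, and w(ε_m)+δ_n ∈ Δ_{+,1}}. Then A consists of exactly three elements: the identity; the element with σ the transposition of m−1 and m and η ≡ 1; and the element with σ the identity and η_{m−1} = η_m = −1, η_i = 1 otherwise. Consequently Σ_{w∈A}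 sgn(σ(w)) = 1. -/
open scoped Classical

/-- The action of a signed permutation `(σ,η)` of the `ε`-coordinates on
`ℝ^{m+n} = span(ε_1,…,ε_m,δ_1,…,δ_n)`: `ε_i ↦ η_i ε_{σ(i)}`, `δ_j ↦ δ_j`. -/
noncomputable def dAct (m n : ℕ) (σ : Equiv.Perm (Fin m)) (η : Fin m → ℤˣ)
    (f : Fin m ⊕ Fin n → ℝ) : Fin m ⊕ Fin n → ℝ :=
  Sum.elim (fun j => ((η (σ.symm j) : ℤ) : ℝ) * f (Sum.inl (σ.symm j)))
    (fun b => f (Sum.inr b))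

/-- `ρ = Σ_{i=1}^{n} (m−n−1)ε_i + Σ_{i=n+1}^{m−1} (m−1−i)ε_i` (with the
coefficient of `ε_m` equal to `0`); `1`-indexed, coordinates `0`-indexed. -/
noncomputable def dRho (m n : ℕ) : Fin m ⊕ Fin n → ℝ :=
  Sum.elim (fun i => if (i : ℕ) < n then (m : ℝ) - n - 1
      else if (i : ℕ) + 1 < m then (m : ℝ) - 2 - (i : ℕ) else 0)
    (fun _ => 0)

/-- The set of positive odd roots
`Δ₊₁ = {ε_a+δ_b} ∪ {ε_a−δ_b : b≤n−1, a≤b} ∪ {ε_a−δ_n : a≤m−1}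
 ∪ {δ_b−ε_a : b≤n−1, a>b} ∪ {δ_n−ε_m}` (`1`-indexed; coordinates
`0`-indexed). -/
noncomputable def dOddPos (m n : ℕ) : Set (Fin m ⊕ Fin n → ℝ) :=
  {v | (∃ (a : Fin m) (b : Fin n),
          v = Pi.single (Sum.inl a) 1 + Pi.single (Sum.inr b) 1) ∨
       (∃ (a : Fin m) (b : Fin n), (b : ℕ) + 1 < n ∧ (a : ℕ) ≤ (b : ℕ) ∧
          v = Pi.single (Sum.inl a) 1 - Pi.single (Sum.inr b) 1) ∨
       (∃ a : Fin m, (a : ℕ) + 1 < m ∧ ∃ hb : n - 1 < n,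
          v = Pi.single (Sum.inl a) 1 - Pi.single (Sum.inr ⟨n - 1, hb⟩) 1) ∨
       (∃ (a : Fin m) (b : Fin n), (b : ℕ) + 1 < n ∧ (b : ℕ) < (a : ℕ) ∧
          v = Pi.single (Sum.inr b) 1 - Pi.single (Sum.inl a) 1) ∨
       (∃ (hm : m - 1 < m) (hb : n - 1 < n),
          v = Pi.single (Sum.inr ⟨n - 1, hb⟩) 1 -
              Pi.single (Sum.inl ⟨m - 1, hm⟩) 1)}

lemma oddpos_sub {m n : ℕ} (p : Fin m) (c : ℤˣ) (q : Fin n) (hq : (q:ℕ) + 1 < n)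
    (h : (((c : ℤ) : ℝ) • (Pi.single (Sum.inl p) 1 : Fin m ⊕ Fin n → ℝ)
        - Pi.single (Sum.inr q) 1) ∈ dOddPos m n) :
    c = 1 ∧ (p : ℕ) ≤ (q : ℕ) := by
  rcases h with ⟨a, b, hv⟩ | ⟨a, b, hb, hab, hv⟩ | ⟨a, ha, hb, hv⟩ | ⟨a, b, hb, hab, hv⟩ | ⟨hm', hb, hv⟩
  · have h1 := congrFun hv (Sum.inr q)
    simp [Pi.single_apply] at h1
    split_ifs at h1 <;> norm_num at h1
  · have hbq : b = q := by
      by_contra hne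
      have h1 := congrFun hv (Sum.inr q)
      simp [Pi.single_apply, Ne.symm hne] at h1
    subst hbq
    have hpa : p = a := by
      by_contra hne
      have h2 := congrFun hv (Sum.inl a)
      rcases Int.units_eq_one_or c with h | h <;>
        simp [Pi.single_apply, h, Ne.symm hne] at h2
    subst hpa
    refine ⟨?_, hab⟩
    rcases Int.units_eq_one_or c with h | h
    · exact h
    · have h2 := congrFun hv (Sum.inl p)
      simp [Pi.single_apply, h] at h2
      norm_num at h2
  · have hq' : q = (⟨n-1, hb⟩ : Fin n) := by
      by_contra hne
      have h1 := congrFun hv (Sum.inr q)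
      simp [Pi.single_apply, hne, Ne.symm hne] at h1
    have := congrArg Fin.val hq'
    simp at this
    omega
  · have h1 := congrFun hv (Sum.inr b)
    simp [Pi.single_apply] at h1
    split_ifs at h1 <;> norm_num at h1
  · have h1 := congrFun hv (Sum.inr ⟨n-1, hb⟩)
    simp [Pi.single_apply] at h1
    split_ifs at h1 <;> norm_num at h1

lemma oddpos_add {m n : ℕ} (hn : 0 < n) (p : Fin m) (c : ℤˣ)
    (h : (((c : ℤ) : ℝ) • (Pi.single (Sum.inl p) 1 : Fin m ⊕ Fin n → ℝ)
        + Pi.single (Sum.inr ⟨n-1, by omega⟩) 1) ∈ dOddPos m n) :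
    c = 1 ∨ (c = -1 ∧ (p : ℕ) = m - 1) := by
  rcases h with ⟨a, b, hv⟩ | ⟨a, b, hb, hab, hv⟩ | ⟨a, ha, hb, hv⟩ | ⟨a, b, hb, hab, hv⟩ | ⟨hm', hb, hv⟩
  · left
    rcases Int.units_eq_one_or c with h | h
    · exact h
    · exfalso
      have hpa : p = a := by
        by_contra hne
        have h2 := congrFun hv (Sum.inl a)
        simp [Pi.single_apply, h, Ne.symm hne] at h2
      subst hpa
      have h2 := congrFun hv (Sum.inl p)
      simp [Pi.single_apply, h] at h2
      norm_num at h2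
  · have h1 := congrFun hv (Sum.inr b)
    simp [Pi.single_apply] at h1
    split_ifs at h1 with hh
    · have := congrArg Fin.val hh
      simp at this
      omega
    · norm_num at h1
  · have h1 := congrFun hv (Sum.inr ⟨n-1, hb⟩)
    simp [Pi.single_apply] at h1
    norm_num at h1
  · have h1 := congrFun hv (Sum.inr b)
    simp [Pi.single_apply] at h1
    have := congrArg Fin.val h1
    simp at this
    omega
  · right
    have hpa : p = (⟨m-1, hm'⟩ : Fin m) := by
      by_contra hne
      have h2 := congrFun hv (Sum.inl ⟨m-1, hm'⟩)
      simp [Pi.single_apply, Ne.symm hne] at h2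
    refine ⟨?_, by rw [hpa]⟩
    rcases Int.units_eq_one_or c with h | h
    · exfalso
      subst hpa
      have h2 := congrFun hv (Sum.inl ⟨m-1, hm'⟩)
      simp [Pi.single_apply, h] at h2
      norm_num at h2
    · exact h

set_option maxHeartbeats 4000000 in
/-- Step (ii) for `D(m,n)`, `m > n`, second equivalence class: the set
`A = {w ∈ W^# : wρ = ρ, wS ⊆ Δ₊}` consists of exactly the identity,
`s_{ε_{m−1}−ε_m}`, and `s_{ε_{m−1}−ε_m}s_{ε_{m−1}+ε_m}`; consequently
`Σ_{w∈A} sgn(w) = 1`. -/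
theorem D_step_ii (m n : ℕ) (hn : 1 ≤ n) (hmn : n < m)
    (A : Set (Equiv.Perm (Fin m) × (Fin m → ℤˣ)))
    (hA : A = {w | (∏ i, w.2 i = 1) ∧
      dAct m n w.1 w.2 (dRho m n) = dRho m n ∧
      (∀ i : Fin n, (i : ℕ) + 1 < n →
        (((w.2 (Fin.castLE hmn.le i) : ℤ) : ℝ) •
            (Pi.single (Sum.inl (w.1 (Fin.castLE hmn.le i))) 1 :
              Fin m ⊕ Fin n → ℝ) -
          Pi.single (Sum.inr i) 1) ∈ dOddPos m n) ∧
      (((w.2 ⟨m - 1, by omega⟩ : ℤ) : ℝ) •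
          (Pi.single (Sum.inl (w.1 ⟨m - 1, by omega⟩)) 1 :
            Fin m ⊕ Fin n → ℝ) +
        Pi.single (Sum.inr ⟨n - 1, by omega⟩) 1) ∈ dOddPos m n}) :
    A = ({((1 : Equiv.Perm (Fin m)), (fun _ => 1 : Fin m → ℤˣ)),
          ((Equiv.swap ⟨m - 2, by omega⟩ ⟨m - 1, by omega⟩ :
              Equiv.Perm (Fin m)), (fun _ => 1 : Fin m → ℤˣ)),
          ((1 : Equiv.Perm (Fin m)),
            (fun i => if (i : ℕ) = m - 2 ∨ (i : ℕ) = m - 1 then -1 else 1 :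
              Fin m → ℤˣ))} :
        Set (Equiv.Perm (Fin m) × (Fin m → ℤˣ))) ∧
    (∑ w ∈ Finset.univ.filter (fun w : Equiv.Perm (Fin m) × (Fin m → ℤˣ) =>
        w ∈ A), (Equiv.Perm.sign w.1 : ℤ)) = 1 := by
  have hm2 : 2 ≤ m := by omega
  set a : Fin m := ⟨m - 2, by omega⟩ with ha_def
  set b : Fin m := ⟨m - 1, by omega⟩ with hb_def
  have hab : a ≠ b := by
    intro h
    have := congrArg Fin.val h
    simp [ha_def, hb_def] at this
    omega
  -- the three elements
  set e1 : Equiv.Perm (Fin m) × (Fin m → ℤˣ) := (1, fun _ => 1) with he1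
  set e2 : Equiv.Perm (Fin m) × (Fin m → ℤˣ) := (Equiv.swap a b, fun _ => 1) with he2
  set e3 : Equiv.Perm (Fin m) × (Fin m → ℤˣ) :=
    (1, fun i => if (i : ℕ) = m - 2 ∨ (i : ℕ) = m - 1 then -1 else 1) with he3
  -- ρ vanishes at a and b
  have rho0 : ∀ j : Fin m, (j : ℕ) = m - 2 ∨ (j : ℕ) = m - 1 →
      dRho m n (Sum.inl j) = 0 := by
    intro j hj
    have hnm : (n : ℝ) < m := by exact_mod_cast hmn
    simp only [dRho, Sum.elim_inl]
    split_ifs with h1 h2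
    · -- j < n and j = m-2 (j = m-1 impossible)
      have hjm : (j : ℕ) = m - 2 := by omega
      have : (n : ℝ) + 1 = (m : ℝ) := by exact_mod_cast (by omega : n + 1 = m)
      linarith
    · -- ¬ j < n, j + 1 < m, so j = m - 2
      have hjm : (j : ℕ) = m - 2 := by omega
      have : ((j : ℕ) : ℝ) = (m : ℝ) - 2 := by
        rw [hjm, Nat.cast_sub (by omega)]; norm_num
      rw [this]; ring
    · rfl
  -- membership of the three elements
  have mem1 : e1 ∈ A := by
    rw [hA]
    refine ⟨by simp [he1], ?_, ?_, ?_⟩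
    · funext x
      cases x with
      | inl j => simp [dAct, he1]; rfl
      | inr j => simp [dAct]
    · intro i hi
      right; left
      exact ⟨Fin.castLE hmn.le i, i, hi, le_refl _, by simp [he1]⟩
    · left
      exact ⟨⟨m - 1, by omega⟩, ⟨n - 1, by omega⟩, by simp [he1]; rfl⟩
  have mem2 : e2 ∈ A := by
    rw [hA]
    refine ⟨by simp [he2], ?_, ?_, ?_⟩
    · funext x
      cases x with
      | inl j =>
        simp only [dAct, Sum.elim_inl, he2, Equiv.symm_swap]
        by_cases hja : j = a
        · subst hja
          rw [Equiv.swap_apply_left]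
          simp [rho0 a (Or.inl rfl), rho0 b (Or.inr rfl)]
        · by_cases hjb : j = b
          · subst hjb
            rw [Equiv.swap_apply_right]
            simp [rho0 a (Or.inl rfl), rho0 b (Or.inr rfl)]
          · rw [Equiv.swap_apply_of_ne_of_ne hja hjb]
            simp
      | inr j => simp [dAct]
    · intro i hi
      right; left
      refine ⟨Fin.castLE hmn.le i, i, hi, le_refl _, ?_⟩
      have h1 : Equiv.swap a b (Fin.castLE hmn.le i) = Fin.castLE hmn.le i := by
        apply Equiv.swap_apply_of_ne_of_ne
        · intro h
          have := congrArg Fin.val h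
          simp [ha_def] at this
          omega
        · intro h
          have := congrArg Fin.val h
          simp [hb_def] at this
          omega
      simp [he2, h1]
    · left
      have h1 : Equiv.swap a b ⟨m - 1, by omega⟩ = a := by
        have : (⟨m - 1, by omega⟩ : Fin m) = b := rfl
        rw [this, Equiv.swap_apply_right]
      refine ⟨a, ⟨n - 1, by omega⟩, ?_⟩
      simp [he2, h1]
  have mem3 : e3 ∈ A := by
    rw [hA]
    refine ⟨?_, ?_, ?_, ?_⟩
    · -- product of the η's is 1
      have : ∏ i : Fin m, e3.2 i = ∏ i ∈ ({a, b} : Finset (Fin m)), e3.2 i := by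
        refine (Finset.prod_subset (Finset.subset_univ _) ?_).symm
        intro x _ hx
        simp only [Finset.mem_insert, Finset.mem_singleton] at hx
        push_neg at hx
        have hx1 : (x : ℕ) ≠ m - 2 := fun h => hx.1 (Fin.ext (by simp [ha_def, h]))
        have hx2 : (x : ℕ) ≠ m - 1 := fun h => hx.2 (Fin.ext (by simp [hb_def, h]))
        simp [he3, hx1, hx2]
      rw [this, Finset.prod_pair hab]
      simp [he3, ha_def, hb_def]
    · funext x
      cases x with
      | inl j =>
        show ((e3.2 j : ℤ) : ℝ) * dRho m n (Sum.inl j) = dRho m n (Sum.inl j)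
        by_cases hj : (j : ℕ) = m - 2 ∨ (j : ℕ) = m - 1
        · rw [rho0 j hj]; ring
        · push_neg at hj
          simp [he3, hj.1, hj.2]
      | inr j => simp [dAct]
    · intro i hi
      right; left
      refine ⟨Fin.castLE hmn.le i, i, hi, le_refl _, ?_⟩
      have h1 : (i : ℕ) ≠ m - 2 := by omega
      have h2 : (i : ℕ) ≠ m - 1 := by omega
      simp [he3, h1, h2]
    · right; right; right; right
      refine ⟨by omega, by omega, ?_⟩
      have h1 : ((e3.2 ⟨m - 1, by omega⟩ : ℤ) : ℝ) = -1 := by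
        simp [he3]
      rw [h1]
      have h2 : e3.1 ⟨m - 1, by omega⟩ = (⟨m - 1, by omega⟩ : Fin m) := rfl
      rw [h2, neg_smul, one_smul]
      abel
  -- Forward direction: any element of A is one of the three
  have forward : ∀ w ∈ A, w = e1 ∨ w = e2 ∨ w = e3 := by
    rintro ⟨σ, η⟩ hw
    rw [hA] at hw
    obtain ⟨hprod, hrho, hS, hlast⟩ := hw
    -- key : the ρ-equivariance pointwise
    have key : ∀ i : Fin m, ((η i : ℤ) : ℝ) * dRho m n (Sum.inl i) =
        dRho m n (Sum.inl (σ i)) := by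
      intro i
      have := congrFun hrho (Sum.inl (σ i))
      simp only [dAct, Sum.elim_inl, Equiv.symm_apply_apply] at this
      rw [this]
    have Rnonneg : ∀ i : Fin m, 0 ≤ dRho m n (Sum.inl i) := by
      intro i
      have hnm : (n : ℝ) + 1 ≤ m := by exact_mod_cast hmn
      simp only [dRho, Sum.elim_inl]
      split_ifs with h1 h2
      · linarith
      · have : ((i : ℕ) : ℝ) + 2 ≤ m := by exact_mod_cast h2
        linarith
      · exact le_refl 0
    -- from the S-conditions: η = 1 and σ decreases on indices < n-1
    have hstep : ∀ i : Fin m, (i : ℕ) + 1 < n → η i = 1 ∧ ((σ i : ℕ) ≤ (i : ℕ)) := by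
      intro i hi
      have h := hS ⟨(i : ℕ), by omega⟩ hi
      have h2 := oddpos_sub (m := m) (n := n) (σ i) (η i) ⟨(i : ℕ), by omega⟩ hi h
      exact ⟨h2.1, h2.2⟩
    -- characterization of ρ-values at positive coordinates
    have Rchar : ∀ j : Fin m, 0 < dRho m n (Sum.inl j) →
        ((max (j : ℕ) (n - 1) : ℕ) : ℝ) = (m : ℝ) - 2 - dRho m n (Sum.inl j) := by
      intro j hj
      simp only [dRho, Sum.elim_inl] at hj ⊢
      split_ifs at hj ⊢ with h1 h2
      · have hmax : max (j : ℕ) (n - 1) = n - 1 := by omega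
        rw [hmax, Nat.cast_sub hn, Nat.cast_one]
        ring
      · have hmax : max (j : ℕ) (n - 1) = (j : ℕ) := by omega
        rw [hmax]
        ring
      · exact absurd hj (lt_irrefl 0)
    -- σ fixes and η is trivial on all coordinates < m - 2
    have hfix : ∀ k : ℕ, ∀ i : Fin m, (i : ℕ) = k → (i : ℕ) + 2 < m →
        σ i = i ∧ η i = 1 := by
      intro k
      induction k using Nat.strong_induction_on with
      | _ k IH =>
        intro i hik him
        have hsmall : ∀ j : Fin m, (j : ℕ) < k → σ j = j := by
          intro j hj
          exact (IH (j : ℕ) (by omega) j rfl (by omega)).1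
        have main : (σ i : ℕ) ≤ (i : ℕ) → σ i = i := by
          intro hle
          rcases eq_or_lt_of_le hle with heq | hlt
          · exact Fin.ext heq
          · exfalso
            have hjeq : (⟨(σ i : ℕ), (σ i).isLt⟩ : Fin m) = σ i := Fin.ext rfl
            have hj : σ ⟨(σ i : ℕ), (σ i).isLt⟩ = ⟨(σ i : ℕ), (σ i).isLt⟩ :=
              hsmall _ (by omega)
            rw [hjeq] at hj
            have h5 := σ.injective hj
            have := congrArg Fin.val h5
            omega
        by_cases hcase : (i : ℕ) + 1 < n
        · obtain ⟨hη, hle⟩ := hstep i hcase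
          exact ⟨main hle, hη⟩
        · have hri : 0 < dRho m n (Sum.inl i) := by
            have hnm : (n : ℝ) < m := by exact_mod_cast hmn
            have him' : ((i : ℕ) : ℝ) + 2 < m := by exact_mod_cast him
            simp only [dRho, Sum.elim_inl]
            split_ifs with h1 h2
            · have : ((n : ℕ) : ℝ) + 1 < m := by
                exact_mod_cast (by omega : n + 1 < m)
              linarith
            · linarith
            · exact absurd (by omega : (i : ℕ) + 1 < m) h2
          have hη : η i = 1 := by
            rcases Int.units_eq_one_or (η i) with h | h
            · exact h
            · exfalso
              have hk := key i
              rw [h] at hk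
              have h6 := Rnonneg (σ i)
              simp only [Units.val_neg, Units.val_one, Int.cast_neg,
                Int.cast_one] at hk
              linarith
          have hk := key i
          rw [hη] at hk
          simp only [Units.val_one, Int.cast_one, one_mul] at hk
          have hri' : 0 < dRho m n (Sum.inl (σ i)) := by rw [← hk]; exact hri
          have h1 := Rchar i hri
          have h2 := Rchar (σ i) hri'
          rw [hk] at h1
          have h3 : max (i : ℕ) (n - 1) = max ((σ i : ℕ)) (n - 1) := by
            exact_mod_cast h1.trans h2.symm
          have hle : (σ i : ℕ) ≤ (i : ℕ) := by
            have h4 := le_max_left ((σ i : ℕ)) (n - 1)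
            omega
          exact ⟨main hle, hη⟩
    have hbig : ∀ i : Fin m, (i : ℕ) + 2 < m → σ i = i ∧ η i = 1 :=
      fun i h => hfix (i : ℕ) i rfl h
    -- σ permutes {a, b}
    have hperm : ∀ x : Fin m, (x : ℕ) = m - 2 ∨ (x : ℕ) = m - 1 →
        (σ x : ℕ) = m - 2 ∨ (σ x : ℕ) = m - 1 := by
      intro x hx
      by_contra hcon
      push_neg at hcon
      have h2 : (σ x : ℕ) + 2 < m := by have := (σ x).isLt; omega
      have h3 := (hbig (σ x) h2).1
      have h4 := σ.injective h3
      have := congrArg Fin.val h4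
      omega
    have hσb := hperm b (Or.inr rfl)
    -- product condition gives η a * η b = 1
    have hprod2 : η a * η b = 1 := by
      have hsub : ∏ i ∈ ({a, b} : Finset (Fin m)), η i = ∏ i : Fin m, η i := by
        apply Finset.prod_subset (Finset.subset_univ _)
        intro x _ hx
        simp only [Finset.mem_insert, Finset.mem_singleton] at hx
        push_neg at hx
        have hx1 : (x : ℕ) ≠ m - 2 := fun h => hx.1 (Fin.ext h)
        have hx2 : (x : ℕ) ≠ m - 1 := fun h => hx.2 (Fin.ext h)
        have hx3 : (x : ℕ) + 2 < m := by have := x.isLt; omega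
        exact (hbig x hx3).2
      rw [Finset.prod_pair hab] at hsub
      rw [hsub, hprod]
    -- analyze the last condition
    rcases oddpos_add hn (σ b) (η b) hlast with hc1 | ⟨hc, hp⟩
    · -- η b = 1, hence η ≡ 1
      have hηa : η a = 1 := by
        rw [hc1, mul_one] at hprod2
        exact hprod2
      have hηall : η = fun _ => 1 := by
        funext x
        by_cases hx : (x : ℕ) + 2 < m
        · exact (hbig x hx).2
        · have hx' : x = a ∨ x = b := by
            have := x.isLt
            rcases (by omega : (x : ℕ) = m - 2 ∨ (x : ℕ) = m - 1) with h | h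
            · exact Or.inl (Fin.ext h)
            · exact Or.inr (Fin.ext h)
          rcases hx' with rfl | rfl
          · exact hηa
          · exact hc1
      rcases hσb with hσb2 | hσb1
      · -- σ b = a : σ is the swap
        have hσb' : σ b = a := Fin.ext hσb2
        have hσa' : σ a = b := by
          rcases hperm a (Or.inl rfl) with h | h
          · exfalso
            have : σ a = σ b := Fin.ext (h.trans hσb2.symm)
            exact hab (σ.injective this)
          · exact Fin.ext h
        right; left
        rw [he2]
        refine Prod.ext ?_ hηall
        show σ = Equiv.swap a b
        ext x
        by_cases hx : (x : ℕ) + 2 < m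
        · have hxa : x ≠ a := by
            intro h
            rw [ha_def] at h
            have := congrArg Fin.val h
            simp at this
            omega
          have hxb : x ≠ b := by
            intro h
            rw [hb_def] at h
            have := congrArg Fin.val h
            simp at this
            omega
          rw [(hbig x hx).1, Equiv.swap_apply_of_ne_of_ne hxa hxb]
        · have hx' : x = a ∨ x = b := by
            have := x.isLt
            rcases (by omega : (x : ℕ) = m - 2 ∨ (x : ℕ) = m - 1) with h | h
            · exact Or.inl (Fin.ext h)
            · exact Or.inr (Fin.ext h)
          rcases hx' with rfl | rfl
          · rw [hσa', Equiv.swap_apply_left]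
          · rw [hσb', Equiv.swap_apply_right]
      · -- σ b = b : σ is the identity
        have hσb' : σ b = b := Fin.ext hσb1
        have hσa' : σ a = a := by
          rcases hperm a (Or.inl rfl) with h | h
          · exact Fin.ext h
          · exfalso
            have : σ a = σ b := Fin.ext (h.trans hσb1.symm)
            exact hab (σ.injective this)
        left
        rw [he1]
        refine Prod.ext ?_ hηall
        show σ = 1
        ext x
        by_cases hx : (x : ℕ) + 2 < m
        · rw [(hbig x hx).1]; rfl
        · have hx' : x = a ∨ x = b := by
            have := x.isLt
            rcases (by omega : (x : ℕ) = m - 2 ∨ (x : ℕ) = m - 1) with h | h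
            · exact Or.inl (Fin.ext h)
            · exact Or.inr (Fin.ext h)
          rcases hx' with rfl | rfl
          · rw [hσa']; rfl
          · rw [hσb']; rfl
    · -- η b = -1 and σ b = b : the third element
      have hσb' : σ b = b := Fin.ext hp
      have hσa' : σ a = a := by
        rcases hperm a (Or.inl rfl) with h | h
        · exact Fin.ext h
        · exfalso
          have : σ a = σ b := Fin.ext (h.trans hp.symm)
          exact hab (σ.injective this)
      have hηa : η a = -1 := by
        rcases Int.units_eq_one_or (η a) with h | h
        · exfalso
          rw [h, hc, one_mul] at hprod2
          exact absurd hprod2 (by decide)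
        · exact h
      right; right
      rw [he3]
      refine Prod.ext ?_ ?_
      · show σ = 1
        ext x
        by_cases hx : (x : ℕ) + 2 < m
        · rw [(hbig x hx).1]; rfl
        · have hx' : x = a ∨ x = b := by
            have := x.isLt
            rcases (by omega : (x : ℕ) = m - 2 ∨ (x : ℕ) = m - 1) with h | h
            · exact Or.inl (Fin.ext h)
            · exact Or.inr (Fin.ext h)
          rcases hx' with rfl | rfl
          · rw [hσa']; rfl
          · rw [hσb']; rfl
      · show η = _
        funext x
        show η x = if (x : ℕ) = m - 2 ∨ (x : ℕ) = m - 1 then -1 else 1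
        by_cases hx : (x : ℕ) + 2 < m
        · have h1 : ¬((x : ℕ) = m - 2 ∨ (x : ℕ) = m - 1) := by omega
          rw [if_neg h1]
          exact (hbig x hx).2
        · have hx' : x = a ∨ x = b := by
            have := x.isLt
            rcases (by omega : (x : ℕ) = m - 2 ∨ (x : ℕ) = m - 1) with h | h
            · exact Or.inl (Fin.ext h)
            · exact Or.inr (Fin.ext h)
          rcases hx' with rfl | rfl
          · rw [if_pos (Or.inl rfl)]
            exact hηa
          · rw [if_pos (Or.inr rfl)]
            exact hc
  -- assemble
  have hAset : A = ({e1, e2, e3} : Set (Equiv.Perm (Fin m) × (Fin m → ℤˣ))) := by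
    apply Set.eq_of_subset_of_subset
    · intro w hw
      rcases forward w hw with h | h | h <;> simp [h]
    · intro w hw
      simp only [Set.mem_insert_iff, Set.mem_singleton_iff] at hw
      rcases hw with rfl | rfl | rfl
      · exact mem1
      · exact mem2
      · exact mem3
  have hne12 : e1 ≠ e2 := by
    intro h
    have h1 := congrArg Prod.fst h
    simp only [he1, he2] at h1
    exact hab (Equiv.swap_eq_one_iff.mp h1.symm)
  have hne13 : e1 ≠ e3 := by
    intro h
    have h1 := congrArg (fun w : Equiv.Perm (Fin m) × (Fin m → ℤˣ) => w.2 b) h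
    have h2 : (1 : ℤˣ) = if (b : ℕ) = m - 2 ∨ (b : ℕ) = m - 1 then -1 else 1 := by
      simpa [he1, he3] using h1
    rw [if_pos (Or.inr rfl)] at h2
    exact absurd h2 (by decide)
  have hne23 : e2 ≠ e3 := by
    intro h
    have h1 := congrArg Prod.fst h
    simp only [he2, he3] at h1
    exact hab (Equiv.swap_eq_one_iff.mp h1)
  refine ⟨hAset, ?_⟩
  have hfilter : (Finset.univ.filter
      (fun w : Equiv.Perm (Fin m) × (Fin m → ℤˣ) => w ∈ A)) =
      ({e1, e2, e3} : Finset (Equiv.Perm (Fin m) × (Fin m → ℤˣ))) := by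
    ext w
    simp [hAset, Set.mem_insert_iff, Set.mem_singleton_iff]
  rw [hfilter]
  rw [show ({e1, e2, e3} : Finset (Equiv.Perm (Fin m) × (Fin m → ℤˣ))) =
      insert e1 (insert e2 {e3}) from rfl]
  rw [Finset.sum_insert (by simp [hne12, hne13]),
    Finset.sum_insert (by simp [hne23]), Finset.sum_singleton]
  simp only [he1, he2, he3]
  rw [Equiv.Perm.sign_swap hab]
  simp
end

section
/- Let m ≥ n ≥ 1 and, in the field Q(u_1,…,u_m,v_1,…,v_n) of rational functions over Q, define X := Σ_{w∈S_m} sgn(w) · (∏_{i=1}^{n} u_{w(i)}^{m−n−1}) · (∏_{i=n+1}^{m} u_{w(i)}^{m+n+1−2i}) · (∏_{j=1}^{n} v_j^{n+1−m}) / ∏_{i=1}^{n} (1 + v_i^2·u_{w(i)}^{−2}). Then for every τ ∈ S_n, the Q-algebra automorphism of Q(u_1,…,u_m,v_1,…,v_n) sending v_j to v_{τ(j)} for all j and fixing each u_i maps X to sgn(τ)·X. -/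
/-- `S_n`-skew-invariance of the right-hand side `X` of the Weyl denominator
identity for `gl(m|n)`: any (automatically `ℚ`-linear) field automorphism `φ`
of `ℚ(u,v)` fixing the `u`'s and permuting the `v`'s by `τ ∈ S_n` maps `X`
to `sgn(τ)·X`. -/
theorem gl_X_skew_invariant (m n : ℕ) (hn : 1 ≤ n) (hmn : n ≤ m)
    (K : Type*) [Field K] [Algebra (MvPolynomial (Fin m ⊕ Fin n) ℚ) K]
    [IsFractionRing (MvPolynomial (Fin m ⊕ Fin n) ℚ) K]
    (u : Fin m → K) (v : Fin n → K)
    (hu : ∀ i, u i = algebraMap (MvPolynomial (Fin m ⊕ Fin n) ℚ) K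
      (MvPolynomial.X (Sum.inl i)))
    (hv : ∀ j, v j = algebraMap (MvPolynomial (Fin m ⊕ Fin n) ℚ) K
      (MvPolynomial.X (Sum.inr j)))
    (X : K)
    (hX : X = ∑ w : Equiv.Perm (Fin m),
        ((Equiv.Perm.sign w : ℤ) : K) *
          ((∏ i : Fin n, u (w (Fin.castLE hmn i)) ^ ((m : ℤ) - (n : ℤ) - 1)) *
           (∏ i ∈ Finset.univ.filter (fun i : Fin m => n ≤ (i : ℕ)),
              u (w i) ^ ((m : ℤ) + (n : ℤ) - 1 - 2 * (i : ℤ))) *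
           (∏ j : Fin n, v j ^ ((n : ℤ) + 1 - (m : ℤ))) /
           ∏ i : Fin n, (1 + v i ^ 2 * u (w (Fin.castLE hmn i)) ^ (-2 : ℤ))))
    (τ : Equiv.Perm (Fin n)) (φ : K ≃+* K)
    (hφu : ∀ i, φ (u i) = u i) (hφv : ∀ j, φ (v j) = v (τ j)) :
    φ X = ((Equiv.Perm.sign τ : ℤ) : K) * X := by
  classical
  subst hX
  -- the extension of τ⁻¹ to a permutation of Fin m fixing indices ≥ n
  set f : Fin n ↪ Fin m := Fin.castLEEmb hmn with hf
  set σ : Equiv.Perm (Fin m) := (τ⁻¹).viaFintypeEmbedding f with hσ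
  have hσ_cast : ∀ i : Fin n, σ (Fin.castLE hmn i) = Fin.castLE hmn (τ⁻¹ i) := by
    intro i
    have h := Equiv.Perm.viaFintypeEmbedding_apply_image (τ⁻¹) f i
    simpa only [hf, Fin.coe_castLEEmb] using h
  have hσ_fix : ∀ i : Fin m, n ≤ (i : ℕ) → σ i = i := by
    intro i hi
    apply Equiv.Perm.viaFintypeEmbedding_apply_notMem_range
    rintro ⟨j, rfl⟩
    simp only [hf, Fin.coe_castLEEmb, Fin.coe_castLE] at hi
    exact absurd hi (by simpa using j.isLt.not_ge)
  have hσ_sign : Equiv.Perm.sign σ = Equiv.Perm.sign τ := by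
    rw [hσ, Equiv.Perm.viaFintypeEmbedding_sign, map_inv]
    exact (Int.units_inv_eq_self _)
  have hsgnτ : (((Equiv.Perm.sign τ : ℤˣ) : ℤ) : K) * (((Equiv.Perm.sign τ : ℤˣ) : ℤ) : K) = 1 := by
    rcases Int.units_eq_one_or (Equiv.Perm.sign τ) with h | h <;> simp [h]
  -- push φ through the sum
  rw [map_sum, Finset.mul_sum]
  refine Fintype.sum_equiv (Equiv.mulRight σ) _ _ (fun w => ?_)
  simp only [map_mul, map_div₀, map_prod, map_zpow₀, map_intCast, map_add, map_one, map_pow,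
    hφu, hφv, Equiv.coe_mulRight, Equiv.Perm.mul_apply, hσ_cast]
  rw [hσ_sign]
  push_cast
  -- reindex the three products involving τ
  have e1 : (∏ i : Fin n, u (w (Fin.castLE hmn (τ⁻¹ i))) ^ ((m : ℤ) - (n : ℤ) - 1))
      = ∏ i : Fin n, u (w (Fin.castLE hmn i)) ^ ((m : ℤ) - (n : ℤ) - 1) :=
    Equiv.prod_comp τ⁻¹ (fun i => u (w (Fin.castLE hmn i)) ^ ((m : ℤ) - (n : ℤ) - 1))
  have e2 : (∏ j : Fin n, v (τ j) ^ ((n : ℤ) + 1 - (m : ℤ)))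
      = ∏ j : Fin n, v j ^ ((n : ℤ) + 1 - (m : ℤ)) :=
    Equiv.prod_comp τ (fun j => v j ^ ((n : ℤ) + 1 - (m : ℤ)))
  have e3 : (∏ i : Fin n, (1 + v (τ i) ^ 2 * u (w (Fin.castLE hmn i)) ^ (-2 : ℤ)))
      = ∏ i : Fin n, (1 + v i ^ 2 * u (w (Fin.castLE hmn (τ⁻¹ i))) ^ (-2 : ℤ)) := by
    rw [← Equiv.prod_comp τ (fun i => 1 + v i ^ 2 * u (w (Fin.castLE hmn (τ⁻¹ i))) ^ (-2 : ℤ))]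
    simp
  have e4 : (∏ i ∈ Finset.univ.filter (fun i : Fin m => n ≤ (i : ℕ)),
        u (w (σ i)) ^ ((m : ℤ) + (n : ℤ) - 1 - 2 * (i : ℤ)))
      = ∏ i ∈ Finset.univ.filter (fun i : Fin m => n ≤ (i : ℕ)),
        u (w i) ^ ((m : ℤ) + (n : ℤ) - 1 - 2 * (i : ℤ)) := by
    refine Finset.prod_congr rfl fun i hi => ?_
    rw [hσ_fix i (by simpa using hi)]
  rw [e1, e2, e3, e4]
  have key : ∀ a b P : K, a * a = 1 → b * P = a * (b * a * P) := by
    intro a b P h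
    calc b * P = (a * a) * (b * P) := by rw [h, one_mul]
      _ = a * (b * a * P) := by ring
  exact key _ _ _ hsgnτ
end

section
/- Let m > n ≥ 1 and work in Q(u_1,…,u_m,v_1,…,v_n). Let G be the group of pairs (σ,η) with σ ∈ S_m, η ∈ {±1}^m, acting by the Q-algebra automorphism u_i ↦ u_{σ(i)}^{η_i} (fixing each v_j), with sgn(σ,η) := sgn(σ)·∏_i η_i. Define X := Σ_{(σ,η)∈G} sgn(σ,η) · (∏_{i=1}^{m−n} u_{σ(i)}^{η_i(2(m−n−i)+1)}) · (∏_{i=m−n+1}^{m} u_{σ(i)}^{η_i}) · (∏_{j=1}^{n} v_j^{−1}) / ∏_{j=1}^{n} (1 + u_{σ(m−n+j)}^{2η_{m−n+j}}·v_j^{−2}). Then for every τ ∈ S_n and every ζ ∈ {±1}^n, the Q-algebra automorphism of Q(u_1,…,u_m,v_1,…,v_n) sending v_j to v_{τ(j)}^{ζ_j} for all j and fixing each u_i maps X to sgn(τ)·(∏_{j=1}^n ζ_j)·X. -/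
namespace BXaux



private lemma flip_aux {K : Type*} [Field K] (a w : K) (ha : a ≠ 0) (hw : w ≠ 0) :
    a * w / (1 + a ^ 2 * w ^ 2) = a⁻¹ * w⁻¹ / (1 + a⁻¹ ^ 2 * w⁻¹ ^ 2) := by
  have h : (1 + a⁻¹ ^ 2 * w⁻¹ ^ 2) = (a ^ 2 * w ^ 2)⁻¹ * (1 + a ^ 2 * w ^ 2) := by
    field_simp; ring
  rw [h, ← div_div, div_inv_eq_mul]
  congr 1
  field_simp

private lemma key_aux {K : Type*} [Field K] (a w : K) (ha : a ≠ 0) (hw : w ≠ 0)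
    (e z : ℤˣ) :
    a ^ ((e : ℤ)) * (w ^ ((z : ℤ)))⁻¹ / (1 + a ^ (2 * (e : ℤ)) * (w ^ ((z : ℤ))) ^ (-2 : ℤ)) =
    a ^ (((e * z : ℤˣ) : ℤ)) * w⁻¹ / (1 + a ^ (2 * ((e * z : ℤˣ) : ℤ)) * w ^ (-2 : ℤ)) := by
  rcases Int.units_eq_one_or z with hz | hz
  · subst hz; norm_num
  · subst hz
    have hA : a ^ ((e : ℤ)) ≠ 0 := zpow_ne_zero _ ha
    have h1 : (w ^ ((((-1 : ℤˣ)) : ℤ)))⁻¹ = w := by norm_num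
    have h2 : (w ^ ((((-1 : ℤˣ)) : ℤ))) ^ (-2 : ℤ) = w ^ 2 := by
      rw [← zpow_mul]; norm_num
    have h3 : ((e * (-1) : ℤˣ) : ℤ) = -(e : ℤ) := by simp
    rw [h1, h2, h3]
    have h4 : a ^ (2 * (e : ℤ)) = (a ^ ((e : ℤ))) ^ 2 := by
      rw [← zpow_natCast (a ^ ((e:ℤ))) 2, ← zpow_mul]; ring_nf
    have h5 : a ^ (-(e : ℤ)) = (a ^ ((e : ℤ)))⁻¹ := by rw [zpow_neg]
    have h6 : a ^ (2 * -(e : ℤ)) = ((a ^ ((e : ℤ)))⁻¹) ^ 2 := by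
      rw [← zpow_neg, ← zpow_natCast (a ^ (-(e:ℤ))) 2, ← zpow_mul]; ring_nf
    have h7 : w ^ (-2 : ℤ) = (w⁻¹) ^ 2 := by
      rw [inv_pow, ← zpow_natCast w 2, ← zpow_neg]; norm_num
    rw [h4, h5, h6, h7]
    exact flip_aux _ _ hA hw

/-- the position of `δ_j` among the `ε`'s block -/
lemma pp_lt (m n : ℕ) (hmn : n < m) (j : Fin n) : m - n + (j : ℕ) < m := by
  have := j.isLt; omega

def pp (m n : ℕ) (hmn : n < m) (j : Fin n) : Fin m :=
  ⟨m - n + (j : ℕ), pp_lt m n hmn j⟩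

lemma pp_coe (m n : ℕ) (hmn : n < m) (j : Fin n) : ((pp m n hmn j : Fin m) : ℕ) = m - n + j := rfl

def fe (m n : ℕ) (hmn : n < m) : Fin n ≃ {i : Fin m // m - n ≤ (i : ℕ)} where
  toFun j := ⟨pp m n hmn j, by simp [pp]⟩
  invFun i := ⟨(i.1 : ℕ) - (m - n), by have := i.1.isLt; have := i.2; omega⟩
  left_inv j := by apply Fin.ext; simp [pp]
  right_inv i := by
    apply Subtype.ext; apply Fin.ext
    have := i.2
    simp [pp]; omega

def ppi (m n : ℕ) (hmn : n < m) (τ : Equiv.Perm (Fin n)) : Equiv.Perm (Fin m) :=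
  (τ⁻¹).extendDomain (fe m n hmn)

lemma ppi_pp (m n : ℕ) (hmn : n < m) (τ : Equiv.Perm (Fin n)) (j : Fin n) :
    ppi m n hmn τ (pp m n hmn j) = pp m n hmn (τ⁻¹ j) :=
  Equiv.Perm.extendDomain_apply_image τ⁻¹ (fe m n hmn) j

lemma ppi_lt (m n : ℕ) (hmn : n < m) (τ : Equiv.Perm (Fin n)) (i : Fin m)
    (h : (i : ℕ) < m - n) : ppi m n hmn τ i = i :=
  Equiv.Perm.extendDomain_apply_not_subtype τ⁻¹ (fe m n hmn) (by omega)

lemma sign_ppi (m n : ℕ) (hmn : n < m) (τ : Equiv.Perm (Fin n)) :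
    Equiv.Perm.sign (ppi m n hmn τ) = Equiv.Perm.sign τ := by
  rw [ppi, Equiv.Perm.sign_extendDomain, Equiv.Perm.sign_inv]

def gg (m n : ℕ) (hn : 1 ≤ n) (hmn : n < m) (τ : Equiv.Perm (Fin n)) (ζ : Fin n → ℤˣ)
    (i : Fin m) : ℤˣ :=
  if h : m - n ≤ (i : ℕ) then ζ (τ⁻¹ ⟨(i : ℕ) - (m - n), by have := i.isLt; omega⟩) else 1

lemma gg_pp (m n : ℕ) (hn : 1 ≤ n) (hmn : n < m) (τ : Equiv.Perm (Fin n)) (ζ : Fin n → ℤˣ)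
    (j : Fin n) : gg m n hn hmn τ ζ (pp m n hmn j) = ζ (τ⁻¹ j) := by
  rw [gg, dif_pos (by simp [pp])]
  congr 2
  apply Fin.ext
  simp [pp]

lemma gg_lt (m n : ℕ) (hn : 1 ≤ n) (hmn : n < m) (τ : Equiv.Perm (Fin n)) (ζ : Fin n → ℤˣ)
    (i : Fin m) (h : (i : ℕ) < m - n) : gg m n hn hmn τ ζ i = 1 := by
  rw [gg, dif_neg (by omega)]

lemma prod_ge {M : Type*} [CommMonoid M] (m n : ℕ) (hn : 1 ≤ n) (hmn : n < m) (F : Fin m → M) :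
    ∏ i ∈ Finset.univ.filter (fun i : Fin m => m - n ≤ (i : ℕ)), F i
      = ∏ j : Fin n, F (pp m n hmn j) := by
  refine Finset.prod_nbij' (fun i => (⟨(i : ℕ) - (m - n), by have := i.isLt; omega⟩ : Fin n))
    (pp m n hmn) ?_ ?_ ?_ ?_ ?_
  · intro a _; exact Finset.mem_univ _
  · intro a _
    simp only [Finset.mem_filter, Finset.mem_univ, true_and, pp]
    omega
  · intro a ha
    simp only [Finset.mem_filter, Finset.mem_univ, true_and] at ha
    apply Fin.ext; simp [pp]; omega
  · intro a _
    apply Fin.ext; simp [pp]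
  · intro a ha
    simp only [Finset.mem_filter, Finset.mem_univ, true_and] at ha
    congr 1
    apply Fin.ext; simp [pp]; omega

lemma prod_gg (m n : ℕ) (hn : 1 ≤ n) (hmn : n < m) (τ : Equiv.Perm (Fin n)) (ζ : Fin n → ℤˣ) :
    ∏ i, gg m n hn hmn τ ζ i = ∏ j, ζ j := by
  rw [← Finset.prod_filter_mul_prod_filter_not Finset.univ
    (fun i : Fin m => m - n ≤ (i : ℕ)) (gg m n hn hmn τ ζ)]
  have h2 : ∏ i ∈ Finset.univ.filter (fun i : Fin m => ¬ (m - n ≤ (i : ℕ))),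
      gg m n hn hmn τ ζ i = 1 := by
    apply Finset.prod_eq_one
    intro i hi
    simp only [Finset.mem_filter, Finset.mem_univ, true_and] at hi
    exact gg_lt m n hn hmn τ ζ i (by omega)
  rw [h2, mul_one, prod_ge m n hn hmn]
  rw [show (fun j => gg m n hn hmn τ ζ (pp m n hmn j)) = fun j => ζ (τ⁻¹ j) from
    funext fun j => gg_pp m n hn hmn τ ζ j]
  exact Equiv.prod_comp τ⁻¹ ζ


variable {K : Type*} [Field K]

def Ssgn (m : ℕ) (σ : Equiv.Perm (Fin m)) (η : Fin m → ℤˣ) : K :=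
  (((Equiv.Perm.sign σ * ∏ i, η i : ℤˣ) : ℤ) : K)

def N1 (m n : ℕ) (u : Fin m → K) (σ : Equiv.Perm (Fin m)) (η : Fin m → ℤˣ) : K :=
  ∏ i ∈ Finset.univ.filter (fun i : Fin m => (i : ℕ) < m - n),
    u (σ i) ^ (((η i) : ℤ) * (2 * ((m : ℤ) - (n : ℤ)) - 2 * (i : ℤ) - 1))

def ff (m n : ℕ) (hmn : n < m) (u : Fin m → K) (v : Fin n → K)
    (σ : Equiv.Perm (Fin m)) (η : Fin m → ℤˣ) (j : Fin n) : K :=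
  u (σ (pp m n hmn j)) ^ ((η (pp m n hmn j) : ℤ)) * (v j)⁻¹ /
    (1 + u (σ (pp m n hmn j)) ^ (2 * ((η (pp m n hmn j)) : ℤ)) * v j ^ (-2 : ℤ))

def TT (m n : ℕ) (hmn : n < m) (u : Fin m → K) (v : Fin n → K)
    (σ : Equiv.Perm (Fin m)) (η : Fin m → ℤˣ) : K :=
  Ssgn m σ η * (N1 m n u σ η * ∏ j, ff m n hmn u v σ η j)

lemma TT_eq (m n : ℕ) (hn : 1 ≤ n) (hmn : n < m) (u : Fin m → K) (v : Fin n → K)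
    (σ : Equiv.Perm (Fin m)) (η : Fin m → ℤˣ) :
    (((Equiv.Perm.sign σ * ∏ i, η i : ℤˣ) : ℤ) : K) *
      ((∏ i ∈ Finset.univ.filter (fun i : Fin m => (i : ℕ) < m - n),
          u (σ i) ^ (((η i) : ℤ) * (2 * ((m : ℤ) - (n : ℤ)) - 2 * (i : ℤ) - 1))) *
       (∏ i ∈ Finset.univ.filter (fun i : Fin m => m - n ≤ (i : ℕ)),
          u (σ i) ^ ((η i : ℤ))) *
       (∏ j : Fin n, (v j)⁻¹) /
       ∏ j : Fin n,
         (1 + u (σ (pp m n hmn j)) ^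
            (2 * ((η (pp m n hmn j) : ℤ))) *
          v j ^ (-2 : ℤ)))
    = TT m n hmn u v σ η := by
  rw [TT, Ssgn, N1]
  congr 1
  rw [prod_ge m n hn hmn (fun i => u (σ i) ^ ((η i : ℤ))), mul_assoc, mul_div_assoc,
    ← Finset.prod_mul_distrib]
  congr 1
  rw [← Finset.prod_div_distrib]
  rfl


lemma step (m n : ℕ) (hn : 1 ≤ n) (hmn : n < m)
    (u : Fin m → K) (v : Fin n → K) (hu0 : ∀ i, u i ≠ 0) (hv0 : ∀ j, v j ≠ 0)
    (τ : Equiv.Perm (Fin n)) (ζ : Fin n → ℤˣ) (φ : K ≃+* K)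
    (hφu : ∀ i, φ (u i) = u i) (hφv : ∀ j, φ (v j) = v (τ j) ^ ((ζ j : ℤ)))
    (σ : Equiv.Perm (Fin m)) (η : Fin m → ℤˣ) :
    φ (TT m n hmn u v σ η)
      = (((Equiv.Perm.sign τ * ∏ j, ζ j : ℤˣ) : ℤ) : K) *
        TT m n hmn u v (σ * ppi m n hmn τ)
          (fun i => η (ppi m n hmn τ i) * gg m n hn hmn τ ζ i) := by
  set π := ppi m n hmn τ with hπ
  set η' : Fin m → ℤˣ := fun i => η (π i) * gg m n hn hmn τ ζ i with hη'
  set c : K := (((Equiv.Perm.sign τ * ∏ j, ζ j : ℤˣ) : ℤ) : K) with hc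
  have hcc : c * c = 1 := by
    rw [hc, ← Int.cast_mul, ← Units.val_mul, Int.units_mul_self, Units.val_one, Int.cast_one]
  have hS : φ (Ssgn m σ η) = Ssgn m σ η := by rw [Ssgn]; exact map_intCast φ _
  have hN1φ : φ (N1 m n u σ η) = N1 m n u σ η := by
    rw [N1, map_prod]
    exact Finset.prod_congr rfl fun i _ => by rw [map_zpow₀, hφu]
  have hN1inv : N1 m n u (σ * π) η' = N1 m n u σ η := by
    rw [N1, N1]
    refine Finset.prod_congr rfl fun i hi => ?_
    simp only [Finset.mem_filter, Finset.mem_univ, true_and] at hi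
    rw [hη']
    simp only [Equiv.Perm.mul_apply, hπ, ppi_lt m n hmn τ i hi,
      gg_lt m n hn hmn τ ζ i hi, mul_one]
  have hsign : Ssgn m (σ * π) η' = c * Ssgn m σ η := by
    rw [Ssgn, Ssgn, hc, map_mul, hπ, sign_ppi m n hmn τ]
    have hprodη : ∏ i, η' i = (∏ i, η i) * ∏ j, ζ j := by
      rw [hη', Finset.prod_mul_distrib, Equiv.prod_comp π η, prod_gg m n hn hmn τ ζ]
    rw [hprodη]
    push_cast
    ring
  have hfj : ∀ j, φ (ff m n hmn u v σ η j) = ff m n hmn u v (σ * π) η' (τ j) := by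
    intro j
    have h1 : (σ * π) (pp m n hmn (τ j)) = σ (pp m n hmn j) := by
      rw [Equiv.Perm.mul_apply, hπ, ppi_pp, Equiv.Perm.inv_def, Equiv.symm_apply_apply]
    have h2 : η' (pp m n hmn (τ j)) = η (pp m n hmn j) * ζ j := by
      rw [hη', hπ]
      simp only [ppi_pp, gg_pp, Equiv.Perm.inv_def, Equiv.symm_apply_apply]
    rw [ff, ff, h1, h2]
    simp only [map_div₀, map_add, map_one, map_mul, map_zpow₀, map_inv₀, hφu, hφv]
    exact key_aux (u (σ (pp m n hmn j))) (v (τ j)) (hu0 _) (hv0 _) (η (pp m n hmn j)) (ζ j)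
  have hprod : ∏ j, φ (ff m n hmn u v σ η j) = ∏ j, ff m n hmn u v (σ * π) η' j := by
    rw [show (fun j => φ (ff m n hmn u v σ η j)) = fun j => ff m n hmn u v (σ * π) η' (τ j)
      from funext hfj]
    exact Equiv.prod_comp τ _
  rw [TT, TT, map_mul, map_mul, map_prod, hS, hN1φ, hsign, hN1inv, hprod]
  rw [show c * (c * Ssgn m σ η * (N1 m n u σ η * ∏ j, ff m n hmn u v (σ * π) η' j))
      = (c * c) * (Ssgn m σ η * (N1 m n u σ η * ∏ j, ff m n hmn u v (σ * π) η' j)) by ring,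
    hcc, one_mul]

lemma master (m n : ℕ) (hn : 1 ≤ n) (hmn : n < m)
    (u : Fin m → K) (v : Fin n → K) (hu0 : ∀ i, u i ≠ 0) (hv0 : ∀ j, v j ≠ 0)
    (τ : Equiv.Perm (Fin n)) (ζ : Fin n → ℤˣ) (φ : K ≃+* K)
    (hφu : ∀ i, φ (u i) = u i) (hφv : ∀ j, φ (v j) = v (τ j) ^ ((ζ j : ℤ))) :
    φ (∑ σ : Equiv.Perm (Fin m), ∑ η : Fin m → ℤˣ, TT m n hmn u v σ η)
      = (((Equiv.Perm.sign τ * ∏ j, ζ j : ℤˣ) : ℤ) : K) *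
        ∑ σ : Equiv.Perm (Fin m), ∑ η : Fin m → ℤˣ, TT m n hmn u v σ η := by
  rw [map_sum, Finset.mul_sum]
  refine Fintype.sum_bijective (fun σ => σ * ppi m n hmn τ)
    (Equiv.mulRight (ppi m n hmn τ)).bijective _ _ (fun σ => ?_)
  rw [map_sum, Finset.mul_sum]
  have hbij : Function.Bijective
      (fun η : Fin m → ℤˣ =>
        (fun i => η (ppi m n hmn τ i) * gg m n hn hmn τ ζ i : Fin m → ℤˣ)) := by
    have heq : (fun η : Fin m → ℤˣ =>
        (fun i => η (ppi m n hmn τ i) * gg m n hn hmn τ ζ i : Fin m → ℤˣ))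
      = ⇑((Equiv.arrowCongr ((ppi m n hmn τ : Equiv.Perm (Fin m)) :
            Fin m ≃ Fin m).symm (Equiv.refl ℤˣ)).trans
          (Equiv.piCongrRight fun i => Equiv.mulRight (gg m n hn hmn τ ζ i))) := rfl
    rw [heq]
    exact Equiv.bijective _
  exact Fintype.sum_bijective _ hbij _ _
    (fun η => step m n hn hmn u v hu0 hv0 τ ζ φ hφu hφv σ η)

end BXaux

/-- Skew-invariance of the right-hand side `X` of the Weyl denominator
identity for `B(m,n) = osp(2m+1|2n)`, `m > n`, under the group `W₂` of
signed permutations of the `δ`'s: any (automatically `ℚ`-linear) field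
automorphism `φ` of `ℚ(u,v)` fixing the `u`'s and sending `vⱼ ↦ v_{τ(j)}^{ζⱼ}`
maps `X` to `sgn(τ)·(∏ζⱼ)·X`. -/
theorem B_X_skew_invariant (m n : ℕ) (hn : 1 ≤ n) (hmn : n < m)
    (K : Type*) [Field K] [Algebra (MvPolynomial (Fin m ⊕ Fin n) ℚ) K]
    [IsFractionRing (MvPolynomial (Fin m ⊕ Fin n) ℚ) K]
    (u : Fin m → K) (v : Fin n → K)
    (hu : ∀ i, u i = algebraMap (MvPolynomial (Fin m ⊕ Fin n) ℚ) K
      (MvPolynomial.X (Sum.inl i)))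
    (hv : ∀ j, v j = algebraMap (MvPolynomial (Fin m ⊕ Fin n) ℚ) K
      (MvPolynomial.X (Sum.inr j)))
    (X : K)
    (hX : X = ∑ σ : Equiv.Perm (Fin m), ∑ η : Fin m → ℤˣ,
        (((Equiv.Perm.sign σ * ∏ i, η i : ℤˣ) : ℤ) : K) *
          ((∏ i ∈ Finset.univ.filter (fun i : Fin m => (i : ℕ) < m - n),
              u (σ i) ^ (((η i) : ℤ) * (2 * ((m : ℤ) - (n : ℤ)) - 2 * (i : ℤ) - 1))) *
           (∏ i ∈ Finset.univ.filter (fun i : Fin m => m - n ≤ (i : ℕ)),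
              u (σ i) ^ ((η i : ℤ))) *
           (∏ j : Fin n, (v j)⁻¹) /
           ∏ j : Fin n,
             (1 + u (σ ⟨m - n + (j : ℕ), by have := j.isLt; omega⟩) ^
                (2 * ((η ⟨m - n + (j : ℕ), by have := j.isLt; omega⟩ : ℤ))) *
              v j ^ (-2 : ℤ))))
    (τ : Equiv.Perm (Fin n)) (ζ : Fin n → ℤˣ) (φ : K ≃+* K)
    (hφu : ∀ i, φ (u i) = u i)
    (hφv : ∀ j, φ (v j) = v (τ j) ^ ((ζ j : ℤ))) :
    φ X = (((Equiv.Perm.sign τ * ∏ j, ζ j : ℤˣ) : ℤ) : K) * X := by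
  have hinj := IsFractionRing.injective (MvPolynomial (Fin m ⊕ Fin n) ℚ) K
  have hu0 : ∀ i, u i ≠ 0 := by
    intro i h
    rw [hu] at h
    exact MvPolynomial.X_ne_zero _ (hinj (by rw [h, map_zero]))
  have hv0 : ∀ j, v j ≠ 0 := by
    intro j h
    rw [hv] at h
    exact MvPolynomial.X_ne_zero _ (hinj (by rw [h, map_zero]))
  have hXT : X = ∑ σ : Equiv.Perm (Fin m), ∑ η : Fin m → ℤˣ, BXaux.TT m n hmn u v σ η := by
    rw [hX]
    exact Finset.sum_congr rfl fun σ _ => Finset.sum_congr rfl fun η _ =>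
      BXaux.TT_eq m n hn hmn u v σ η
  rw [hXT]
  exact BXaux.master m n hn hmn u v hu0 hv0 τ ζ φ hφu hφv
end
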